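/- Let ρ_t be a family of maps satisfying constant preservation (ρ_t(ξ)=−ξ for ξ that is F_t-measurable) and convexity (ρ_t(θξ+(1−θ)η) ≤ θρ_t(ξ)+(1−θ)ρ_t(η) for θ∈(0,1)). Then ρ satisfies translation invariance: for any ζ that is F_t-measurable and any ξ, ρ_t(ξ+ζ)=ρ_t(ξ)−ζ, provided x ↦ ρ_t(xξ) is continuous in x (which follows from convexity). -/

import Mathlib

open Topology Filter


/-- Translation invariance from constant preservation, convexity and
continuity of `x ↦ ρ (x • ξ)`. -/
theorem stmt_0 {Ω : Type*} (ρ : (Ω → ℝ) → ℝ)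
    (hconst : ∀ c : ℝ, ρ (fun _ => c) = -c)
    (hconv : ∀ ξ η : Ω → ℝ, ∀ θ : ℝ, 0 < θ → θ < 1 →
      ρ (θ • ξ + (1 - θ) • η) ≤ θ * ρ ξ + (1 - θ) * ρ η)
    (hcont : ∀ ξ : Ω → ℝ, Continuous fun x : ℝ => ρ (x • ξ)) :
    ∀ (ξ : Ω → ℝ) (c : ℝ), ρ (ξ + fun _ => c) = ρ ξ - c := by
  have key : ∀ (ξ : Ω → ℝ) (c : ℝ), ρ (ξ + fun _ => c) ≤ ρ ξ - c := by
    intro ξ c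
    -- for θ ∈ (0,1): ρ(ξ+c) ≤ θ * ρ(θ⁻¹ • ξ) - c
    have hstep : ∀ θ : ℝ, θ ∈ Set.Ioo (0:ℝ) 1 →
        ρ (ξ + fun _ => c) ≤ θ * ρ (θ⁻¹ • ξ) - c := by
      rintro θ ⟨hθ0, hθ1⟩
      have h1θ : (0:ℝ) < 1 - θ := by linarith
      have h := hconv (θ⁻¹ • ξ) (fun _ => c / (1 - θ)) θ hθ0 hθ1
      have heq : θ • (θ⁻¹ • ξ) + (1 - θ) • (fun _ => c / (1 - θ) : Ω → ℝ)
          = ξ + fun _ => c := by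
        funext ω
        simp only [Pi.add_apply, Pi.smul_apply, smul_eq_mul]
        field_simp
      rw [heq, hconst] at h
      calc ρ (ξ + fun _ => c) ≤ θ * ρ (θ⁻¹ • ξ) + (1 - θ) * -(c / (1 - θ)) := h
        _ = θ * ρ (θ⁻¹ • ξ) - c := by field_simp; ring
    -- take the limit θ → 1⁻
    have hne : (𝓝[Set.Ioo (0:ℝ) 1] 1).NeBot := by
      apply mem_closure_iff_nhdsWithin_neBot.mp
      rw [closure_Ioo zero_ne_one]
      exact Set.right_mem_Icc.mpr zero_le_one
    have htend : Filter.Tendsto (fun θ : ℝ => θ * ρ (θ⁻¹ • ξ) - c)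
        (𝓝[Set.Ioo (0:ℝ) 1] 1) (𝓝 (ρ ξ - c)) := by
      have h1 : Filter.Tendsto (fun θ : ℝ => ρ (θ⁻¹ • ξ)) (𝓝 1) (𝓝 (ρ ξ)) := by
        have := (hcont ξ).continuousAt (x := (1:ℝ)⁻¹)
        have h2 := this.comp (continuousAt_inv₀ (one_ne_zero (α := ℝ)))
        simpa [Function.comp_def, inv_one] using h2.tendsto
      have : Filter.Tendsto (fun θ : ℝ => θ * ρ (θ⁻¹ • ξ) - c) (𝓝 1)
          (𝓝 (1 * ρ ξ - c)) := ((Filter.tendsto_id.mul h1).sub tendsto_const_nhds)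
      simpa using this.mono_left nhdsWithin_le_nhds
    exact ge_of_tendsto htend (Filter.eventually_mem_set.mpr self_mem_nhdsWithin
      |>.mono hstep)
  intro ξ c
  refine le_antisymm (key ξ c) ?_
  have h := key (ξ + fun _ => c) (-c)
  have heq : ((ξ + fun _ => c) + fun _ => -c) = ξ := by funext ω; simp
  rw [heq] at h
  linarith
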